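/- Let L : ℝⁿ → ℝ be a non-negative convex function with L(0) = 0 and L(x) > 0 for x ≠ 0, satisfying the two-sided Δ₂-condition, and let Ψ(r) = Ψ_L(r) = inf_{x ≠ 0} L(rx)/L(x) for r ≥ 0. Then: Ψ(r) = 1/Φ_L(1/r) for r > 0; (c) Ψ is super-multiplicative, i.e. Ψ(rs) ≥ Ψ(r)·Ψ(s) for all r, s ≥ 0; and (d) writing p₋ = Φ_L′(1−) and p₊ = Φ_L′(1+), one has Ψ(r) ≥ r^{p₊} for 0 ≤ r ≤ 1 and Ψ(r) ≥ r^{p₋} for r ≥ 1. -/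

import Mathlib

open Set Filter Real

/-- The Young function associated to `L`: `Φ_L(r) = sup_{x ≠ 0} L(rx)/L(x)`. -/
noncomputable def PhiL {n : ℕ} (L : EuclideanSpace ℝ (Fin n) → ℝ) (r : ℝ) : ℝ :=
  sSup ((fun x => L (r • x) / L x) '' {x : EuclideanSpace ℝ (Fin n) | x ≠ 0})

/-- The companion function `Ψ_L(r) = inf_{x ≠ 0} L(rx)/L(x)`. -/
noncomputable def PsiL {n : ℕ} (L : EuclideanSpace ℝ (Fin n) → ℝ) (r : ℝ) : ℝ :=
  sInf ((fun x => L (r • x) / L x) '' {x : EuclideanSpace ℝ (Fin n) | x ≠ 0})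

theorem stmt8 {n : ℕ} (hn : 0 < n) (L : EuclideanSpace ℝ (Fin n) → ℝ)
    (hconv : ConvexOn ℝ Set.univ L) (hnonneg : ∀ x, 0 ≤ L x) (h0 : L 0 = 0)
    (hpos : ∀ x, x ≠ 0 → 0 < L x)
    (hDelta2 : ∃ C : ℝ, ∀ x : EuclideanSpace ℝ (Fin n), L ((2 : ℝ) • x) ≤ C * L x)
    (pminus pplus : ℝ)
    (hpminus : HasDerivWithinAt (PhiL L) pminus (Set.Iio 1) 1)
    (hpplus : HasDerivWithinAt (PhiL L) pplus (Set.Ioi 1) 1) :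
    (∀ r : ℝ, 0 < r → PsiL L r = 1 / PhiL L r⁻¹) ∧
    (∀ r s : ℝ, 0 ≤ r → 0 ≤ s → PsiL L r * PsiL L s ≤ PsiL L (r * s)) ∧
    (∀ r : ℝ, 0 ≤ r → r ≤ 1 → r ^ pplus ≤ PsiL L r) ∧
    (∀ r : ℝ, 1 ≤ r → r ^ pminus ≤ PsiL L r) := by
  classical
  -- a nonzero vector
  obtain ⟨x₀, hx₀⟩ : ∃ x : EuclideanSpace ℝ (Fin n), x ≠ 0 := by
    refine ⟨EuclideanSpace.single ⟨0, hn⟩ 1, ?_⟩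
    intro h
    have := congrArg (fun v : EuclideanSpace ℝ (Fin n) => v ⟨0, hn⟩) h
    simp [EuclideanSpace.single_apply] at this
  obtain ⟨C₀, hC₀⟩ := hDelta2
  set C := max C₀ 1 with hCdef
  have hC1 : (1:ℝ) ≤ C := le_max_right _ _
  have hC2 : ∀ x, L ((2:ℝ) • x) ≤ C * L x := fun x =>
    (hC₀ x).trans (mul_le_mul_of_nonneg_right (le_max_left _ _) (hnonneg x))
  -- convexity along rays
  have hray : ∀ (x : EuclideanSpace ℝ (Fin n)) (t : ℝ), 0 ≤ t → t ≤ 1 →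
      L (t • x) ≤ t * L x := by
    intro x t ht ht1
    have h := hconv.2 (Set.mem_univ x) (Set.mem_univ (0:EuclideanSpace ℝ (Fin n)))
      ht (by linarith : (0:ℝ) ≤ 1 - t) (by ring)
    simpa [h0] using h
  -- monotone along rays
  have hmono : ∀ (x : EuclideanSpace ℝ (Fin n)) (r s : ℝ), 0 ≤ r → r ≤ s → 0 < s →
      L (r • x) ≤ L (s • x) := by
    intro x r s hr hrs hs
    have h1 : L ((r/s) • (s • x)) ≤ (r/s) * L (s • x) :=
      hray _ _ (div_nonneg hr hs.le) ((div_le_one hs).mpr hrs)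
    rw [smul_smul, div_mul_cancel₀ _ hs.ne'] at h1
    calc L (r • x) ≤ (r/s) * L (s • x) := h1
      _ ≤ 1 * L (s • x) := by
          apply mul_le_mul_of_nonneg_right ((div_le_one hs).mpr hrs) (hnonneg _)
      _ = L (s • x) := one_mul _
  -- powers of two
  have hpow : ∀ (k : ℕ) (x : EuclideanSpace ℝ (Fin n)),
      L (((2:ℝ)^k) • x) ≤ C^k * L x := by
    intro k
    induction k with
    | zero => intro x; simp
    | succ k ih =>
        intro x
        have : ((2:ℝ)^(k+1)) • x = (2:ℝ) • (((2:ℝ)^k) • x) := by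
          rw [smul_smul]; ring_nf
        rw [this]
        calc L ((2:ℝ) • (((2:ℝ)^k) • x)) ≤ C * L (((2:ℝ)^k) • x) := hC2 _
          _ ≤ C * (C^k * L x) := by
              apply mul_le_mul_of_nonneg_left (ih x) (by linarith)
          _ = C^(k+1) * L x := by ring
  -- the sets
  have hSne : ∀ r : ℝ,
      ((fun x => L (r • x) / L x) '' {x : EuclideanSpace ℝ (Fin n) | x ≠ 0}).Nonempty :=
    fun r => ⟨_, ⟨x₀, hx₀, rfl⟩⟩
  have hSnonneg : ∀ (r : ℝ) y,
      y ∈ ((fun x => L (r • x) / L x) '' {x : EuclideanSpace ℝ (Fin n) | x ≠ 0}) → 0 ≤ y := by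
    rintro r y ⟨x, hx, rfl⟩
    exact div_nonneg (hnonneg _) (hnonneg _)
  have hSbddb : ∀ r : ℝ,
      BddBelow ((fun x => L (r • x) / L x) '' {x : EuclideanSpace ℝ (Fin n) | x ≠ 0}) :=
    fun r => ⟨0, fun y hy => hSnonneg r y hy⟩
  have hSpos : ∀ (r : ℝ), 0 < r → ∀ y,
      y ∈ ((fun x => L (r • x) / L x) '' {x : EuclideanSpace ℝ (Fin n) | x ≠ 0}) → 0 < y := by
    rintro r hr y ⟨x, hx, rfl⟩
    exact div_pos (hpos _ (smul_ne_zero hr.ne' hx)) (hpos _ hx)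
  have hSbdd : ∀ r : ℝ, 0 ≤ r →
      BddAbove ((fun x => L (r • x) / L x) '' {x : EuclideanSpace ℝ (Fin n) | x ≠ 0}) := by
    intro r hr
    obtain ⟨m, hm⟩ := exists_nat_ge r
    have hr2 : r ≤ (2:ℝ)^m := hm.trans (by exact_mod_cast (Nat.lt_two_pow_self (n := m)).le)
    refine ⟨C^m, ?_⟩
    rintro y ⟨x, hx, rfl⟩
    have h1 : L (r • x) ≤ L (((2:ℝ)^m) • x) := hmono x r _ hr hr2 (by positivity)
    have h2 := hpow m x
    exact (div_le_iff₀ (hpos x hx)).mpr (h1.trans h2)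
  -- Psi nonneg, Psi 0, Psi 1, Phi 1, Phi pos
  have hPsiNonneg : ∀ r : ℝ, 0 ≤ PsiL L r := fun r =>
    le_csInf (hSne r) (hSnonneg r)
  have hPsi0 : PsiL L 0 = 0 := by
    have h : ((fun x => L ((0:ℝ) • x) / L x) '' {x : EuclideanSpace ℝ (Fin n) | x ≠ 0}) = {0} := by
      apply Set.eq_singleton_iff_nonempty_unique_mem.mpr
      refine ⟨hSne 0, ?_⟩
      rintro y ⟨x, hx, rfl⟩
      simp [h0]
    rw [PsiL, h, csInf_singleton]
  have hPsi1 : PsiL L 1 = 1 := by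
    have h : ((fun x => L ((1:ℝ) • x) / L x) '' {x : EuclideanSpace ℝ (Fin n) | x ≠ 0}) = {1} := by
      apply Set.eq_singleton_iff_nonempty_unique_mem.mpr
      refine ⟨hSne 1, ?_⟩
      rintro y ⟨x, hx, rfl⟩
      simp [div_self (hpos x hx).ne']
    rw [PsiL, h, csInf_singleton]
  have hPhi1 : PhiL L 1 = 1 := by
    have h : ((fun x => L ((1:ℝ) • x) / L x) '' {x : EuclideanSpace ℝ (Fin n) | x ≠ 0}) = {1} := by
      apply Set.eq_singleton_iff_nonempty_unique_mem.mpr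
      refine ⟨hSne 1, ?_⟩
      rintro y ⟨x, hx, rfl⟩
      simp [div_self (hpos x hx).ne']
    rw [PhiL, h, csSup_singleton]
  have hPhiPos : ∀ r : ℝ, 0 < r → 0 < PhiL L r := by
    intro r hr
    have hmem : L (r • x₀) / L x₀ ∈
        ((fun x => L (r • x) / L x) '' {x : EuclideanSpace ℝ (Fin n) | x ≠ 0}) := ⟨x₀, hx₀, rfl⟩
    exact lt_of_lt_of_le (hSpos r hr _ hmem) (le_csSup (hSbdd r hr.le) hmem)
  -- (b)
  have hb : ∀ r : ℝ, 0 < r → PsiL L r = 1 / PhiL L r⁻¹ := by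
    intro r hr
    have hrinv : (0:ℝ) < r⁻¹ := inv_pos.mpr hr
    -- the set identity
    have hset : ((fun x => L (r • x) / L x) '' {x : EuclideanSpace ℝ (Fin n) | x ≠ 0}) =
        Inv.inv '' ((fun x => L (r⁻¹ • x) / L x) '' {x : EuclideanSpace ℝ (Fin n) | x ≠ 0}) := by
      ext y
      constructor
      · rintro ⟨x, hx, rfl⟩
        refine ⟨L x / L (r • x), ⟨r • x, smul_ne_zero hr.ne' hx, ?_⟩, ?_⟩
        · simp only [smul_smul, inv_mul_cancel₀ hr.ne', one_smul]
        · exact inv_div _ _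
      · rintro ⟨-, ⟨x, hx, rfl⟩, rfl⟩
        refine ⟨r⁻¹ • x, smul_ne_zero hrinv.ne' hx, ?_⟩
        simp only [smul_smul, mul_inv_cancel₀ hr.ne', one_smul]
        exact (inv_div _ _).symm
    have hTpos := hSpos r⁻¹ hrinv
    have hTbdd := hSbdd r⁻¹ hrinv.le
    have hTne := hSne r⁻¹
    set T := ((fun x => L (r⁻¹ • x) / L x) '' {x : EuclideanSpace ℝ (Fin n) | x ≠ 0}) with hT
    have hsupPos : 0 < sSup T := by
      obtain ⟨a, ha⟩ := hTne
      exact lt_of_lt_of_le (hTpos a ha) (le_csSup hTbdd ha)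
    have hlow : ∀ y ∈ Inv.inv '' T, (sSup T)⁻¹ ≤ y := by
      rintro y ⟨a, ha, rfl⟩
      exact inv_anti₀ (hTpos a ha) (le_csSup hTbdd ha)
    have h1 : (sSup T)⁻¹ ≤ sInf (Inv.inv '' T) :=
      le_csInf (hTne.image _) hlow
    have hinfPos : 0 < sInf (Inv.inv '' T) := lt_of_lt_of_le (inv_pos.mpr hsupPos) h1
    have h2 : sInf (Inv.inv '' T) ≤ (sSup T)⁻¹ := by
      have hub : ∀ a ∈ T, a ≤ (sInf (Inv.inv '' T))⁻¹ := by
        intro a ha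
        have hle : sInf (Inv.inv '' T) ≤ a⁻¹ :=
          csInf_le ⟨(sSup T)⁻¹, hlow⟩ ⟨a, ha, rfl⟩
        exact (le_inv_comm₀ (hTpos a ha) hinfPos).mpr hle
      have := csSup_le hTne hub
      calc sInf (Inv.inv '' T) = ((sInf (Inv.inv '' T))⁻¹)⁻¹ := (inv_inv _).symm
        _ ≤ (sSup T)⁻¹ := inv_anti₀ hsupPos this
    rw [PsiL, hset, one_div, PhiL]
    exact le_antisymm h2 h1
  -- positivity of Psi
  have hPsiPos : ∀ r : ℝ, 0 < r → 0 < PsiL L r := by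
    intro r hr
    rw [hb r hr]
    exact div_pos one_pos (hPhiPos _ (inv_pos.mpr hr))
  -- (c)
  have hc : ∀ r s : ℝ, 0 ≤ r → 0 ≤ s → PsiL L r * PsiL L s ≤ PsiL L (r * s) := by
    intro r s hr hs
    rcases eq_or_lt_of_le hr with hr0 | hr0
    · subst hr0; simp [hPsi0]
    rcases eq_or_lt_of_le hs with hs0 | hs0
    · subst hs0; simp [hPsi0]
    apply le_csInf (hSne (r*s))
    rintro y ⟨x, hx, rfl⟩
    have hsx : (s • x) ≠ 0 := smul_ne_zero hs0.ne' hx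
    have h1 : PsiL L r ≤ L (r • (s • x)) / L (s • x) :=
      csInf_le (hSbddb r) ⟨s • x, hsx, rfl⟩
    have h2 : PsiL L s ≤ L (s • x) / L x := csInf_le (hSbddb s) ⟨x, hx, rfl⟩
    have h3 : PsiL L r * PsiL L s ≤ (L (r • (s • x)) / L (s • x)) * (L (s • x) / L x) :=
      mul_le_mul h1 h2 (hPsiNonneg s) (div_nonneg (hnonneg _) (hnonneg _))
    calc PsiL L r * PsiL L s ≤ (L (r • (s • x)) / L (s • x)) * (L (s • x) / L x) := h3
      _ = L ((r * s) • x) / L x := by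
          rw [div_mul_div_comm, smul_smul]
          rw [mul_comm (L (s • x)) (L x), mul_div_mul_right _ _ (hpos _ hsx).ne']
  -- Phi s ≥ s for s ≥ 1
  have hPhiGe : ∀ s : ℝ, 1 ≤ s → s ≤ PhiL L s := by
    intro s hs
    have hs0 : (0:ℝ) < s := lt_of_lt_of_le one_pos hs
    have h1 : L (s⁻¹ • (s • x₀)) ≤ s⁻¹ * L (s • x₀) :=
      hray _ _ (inv_nonneg.mpr hs0.le) (inv_le_one_of_one_le₀ hs)
    rw [smul_smul, inv_mul_cancel₀ hs0.ne', one_smul] at h1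
    have h2 : s ≤ L (s • x₀) / L x₀ := by
      rw [le_div_iff₀ (hpos x₀ hx₀)]
      calc s * L x₀ ≤ s * (s⁻¹ * L (s • x₀)) := by
            apply mul_le_mul_of_nonneg_left h1 hs0.le
        _ = L (s • x₀) := by field_simp
    exact h2.trans (le_csSup (hSbdd s hs0.le) ⟨x₀, hx₀, rfl⟩)
  -- pplus ≥ 1
  have hpplus1 : 1 ≤ pplus := by
    have htend := hasDerivWithinAt_iff_tendsto_slope.mp hpplus
    have hset : (Set.Ioi (1:ℝ)) \ {1} = Set.Ioi 1 := by
      simp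
    rw [hset] at htend
    refine ge_of_tendsto htend ?_
    filter_upwards [self_mem_nhdsWithin] with s (hs : 1 < s)
    rw [slope_def_field, hPhi1, le_div_iff₀ (by linarith : (0:ℝ) < s - 1)]
    have := hPhiGe s hs.le
    linarith
  -- derivative of Psi within Ioi 1 at 1 equals pminus
  have hPsiDerivIoi : HasDerivWithinAt (PsiL L) pminus (Set.Ioi 1) 1 := by
    have hinvIoi : HasDerivWithinAt (fun r : ℝ => r⁻¹) (-1) (Set.Ioi 1) 1 := by
      have h := (hasDerivAt_inv (one_ne_zero : (1:ℝ) ≠ 0)).hasDerivWithinAt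
        (s := Set.Ioi 1)
      simpa using h
    have hmap : Set.MapsTo (fun r : ℝ => r⁻¹) (Set.Ioi 1) (Set.Iio 1) :=
      fun r hr => by exact inv_lt_one_of_one_lt₀ (a := r) (Set.mem_Ioi.mp hr)
    have hg : HasDerivWithinAt (PhiL L) pminus (Set.Iio 1) ((fun r : ℝ => r⁻¹) 1) := by
      simpa using hpminus
    have hcomp := HasDerivWithinAt.comp (1:ℝ) hg hinvIoi hmap
    have hne : (PhiL L ∘ fun r : ℝ => r⁻¹) 1 ≠ 0 := by
      simp [Function.comp, hPhi1]
    have hinv2 := hcomp.inv hne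
    have hval : -(pminus * -1) / ((PhiL L ∘ fun r : ℝ => r⁻¹) 1)^2 = pminus := by
      simp [Function.comp, hPhi1]
    rw [hval] at hinv2
    refine hinv2.congr ?_ ?_
    · intro y hy
      have hy0 : (0:ℝ) < y := lt_trans one_pos hy
      rw [hb y hy0, one_div]
      rfl
    · rw [hPsi1]
      simp [Function.comp, hPhi1]
  -- derivative of Psi within Ioo 0 1 at 1 equals pplus
  have hPsiDerivIoo : HasDerivWithinAt (PsiL L) pplus (Set.Ioo 0 1) 1 := by
    have hinvIoo : HasDerivWithinAt (fun r : ℝ => r⁻¹) (-1) (Set.Ioo 0 1) 1 := by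
      have h := (hasDerivAt_inv (one_ne_zero : (1:ℝ) ≠ 0)).hasDerivWithinAt
        (s := Set.Ioo 0 1)
      simpa using h
    have hmap : Set.MapsTo (fun r : ℝ => r⁻¹) (Set.Ioo 0 1) (Set.Ioi 1) :=
      fun r hr => one_lt_inv_iff₀.mpr ⟨hr.1, hr.2⟩
    have hg : HasDerivWithinAt (PhiL L) pplus (Set.Ioi 1) ((fun r : ℝ => r⁻¹) 1) := by
      simpa using hpplus
    have hcomp := HasDerivWithinAt.comp (1:ℝ) hg hinvIoo hmap
    have hne : (PhiL L ∘ fun r : ℝ => r⁻¹) 1 ≠ 0 := by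
      simp [Function.comp, hPhi1]
    have hinv2 := hcomp.inv hne
    have hval : -(pplus * -1) / ((PhiL L ∘ fun r : ℝ => r⁻¹) 1)^2 = pplus := by
      simp [Function.comp, hPhi1]
    rw [hval] at hinv2
    refine hinv2.congr ?_ ?_
    · intro y hy
      have hy0 : (0:ℝ) < y := hy.1
      rw [hb y hy0, one_div]
      rfl
    · rw [hPsi1]
      simp [Function.comp, hPhi1]
  -- the auxiliary function g
  set g : ℝ → ℝ := fun t => Real.log (PsiL L (Real.exp t)) with hgdef
  have hg0 : g 0 = 0 := by simp [hgdef, Real.exp_zero, hPsi1]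
  have hgIoi : HasDerivWithinAt g pminus (Set.Ioi 0) 0 := by
    have hexp : HasDerivWithinAt Real.exp (Real.exp 0) (Set.Ioi 0) 0 :=
      (Real.hasDerivAt_exp 0).hasDerivWithinAt
    have hmap : Set.MapsTo Real.exp (Set.Ioi 0) (Set.Ioi 1) := by
      intro t ht
      simpa [Real.exp_zero] using Real.exp_lt_exp.mpr (ht : (0:ℝ) < t)
    have hΨ : HasDerivWithinAt (PsiL L) pminus (Set.Ioi 1) (Real.exp 0) := by
      simpa [Real.exp_zero] using hPsiDerivIoi
    have hcomp := HasDerivWithinAt.comp (0:ℝ) hΨ hexp hmap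
    have hlog : HasDerivAt Real.log (PsiL L (Real.exp 0))⁻¹ (PsiL L (Real.exp 0)) := by
      apply Real.hasDerivAt_log
      rw [Real.exp_zero, hPsi1]; exact one_ne_zero
    have hcomp2 := HasDerivAt.comp_hasDerivWithinAt (0:ℝ) hlog hcomp
    have : (PsiL L (Real.exp 0))⁻¹ * (pminus * Real.exp 0) = pminus := by
      rw [Real.exp_zero, hPsi1]; ring
    rw [this] at hcomp2
    exact hcomp2
  have hgIio : HasDerivWithinAt g pplus (Set.Iio 0) 0 := by
    have hexp : HasDerivWithinAt Real.exp (Real.exp 0) (Set.Iio 0) 0 :=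
      (Real.hasDerivAt_exp 0).hasDerivWithinAt
    have hmap : Set.MapsTo Real.exp (Set.Iio 0) (Set.Ioo 0 1) := by
      intro t ht
      refine ⟨Real.exp_pos t, ?_⟩
      simpa [Real.exp_zero] using Real.exp_lt_exp.mpr (ht : t < (0:ℝ))
    have hΨ : HasDerivWithinAt (PsiL L) pplus (Set.Ioo 0 1) (Real.exp 0) := by
      simpa [Real.exp_zero] using hPsiDerivIoo
    have hcomp := HasDerivWithinAt.comp (0:ℝ) hΨ hexp hmap
    have hlog : HasDerivAt Real.log (PsiL L (Real.exp 0))⁻¹ (PsiL L (Real.exp 0)) := by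
      apply Real.hasDerivAt_log
      rw [Real.exp_zero, hPsi1]; exact one_ne_zero
    have hcomp2 := HasDerivAt.comp_hasDerivWithinAt (0:ℝ) hlog hcomp
    have : (PsiL L (Real.exp 0))⁻¹ * (pplus * Real.exp 0) = pplus := by
      rw [Real.exp_zero, hPsi1]; ring
    rw [this] at hcomp2
    exact hcomp2
  -- superadditivity of g
  have hsuper : ∀ a b : ℝ, g a + g b ≤ g (a + b) := by
    intro a b
    have h := hc (Real.exp a) (Real.exp b) (Real.exp_nonneg a) (Real.exp_nonneg b)
    rw [← Real.exp_add] at h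
    have hpa := hPsiPos _ (Real.exp_pos a)
    have hpb := hPsiPos _ (Real.exp_pos b)
    calc g a + g b = Real.log (PsiL L (Real.exp a) * PsiL L (Real.exp b)) :=
          (Real.log_mul hpa.ne' hpb.ne').symm
      _ ≤ g (a + b) := Real.log_le_log (by positivity) h
  have hiter : ∀ (k : ℕ) (t : ℝ), (k : ℝ) * g t ≤ g ((k : ℝ) * t) := by
    intro k
    induction k with
    | zero => intro t; simp [hg0]
    | succ k ih =>
        intro t
        have h1 : ((k:ℝ) * t) + t = ((k:ℝ)+1) * t := by ring
        have h2 := hsuper ((k:ℝ) * t) t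
        rw [h1] at h2
        push_cast
        calc ((k:ℝ)+1) * g t = (k:ℝ) * g t + g t := by ring
          _ ≤ g ((k:ℝ)*t) + g t := by linarith [ih t]
          _ ≤ g (((k:ℝ)+1) * t) := h2
  -- key limit lemma
  have hlim : ∀ (t p : ℝ) (s : Set ℝ), t ≠ 0 → HasDerivWithinAt g p s 0 →
      (∀ k : ℕ, t / ((k:ℝ)+1) ∈ s) → (0:ℝ) ∉ s → p * t ≤ g t := by
    intro t p s ht hder hmem h0s
    have htend := hasDerivWithinAt_iff_tendsto_slope.mp hder
    rw [Set.diff_singleton_eq_self h0s] at htend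
    have hseq : Tendsto (fun k : ℕ => t / ((k:ℝ)+1)) atTop (nhdsWithin 0 s) := by
      apply tendsto_nhdsWithin_of_tendsto_nhds_of_eventually_within
      · exact Filter.Tendsto.div_atTop tendsto_const_nhds
          (Filter.tendsto_atTop_add_const_right _ _ tendsto_natCast_atTop_atTop)
      · exact Filter.Eventually.of_forall hmem
    have hslope : Tendsto (fun k : ℕ => slope g 0 (t / ((k:ℝ)+1))) atTop (nhds p) :=
      htend.comp hseq
    have h2 : Tendsto (fun k : ℕ => t * slope g 0 (t / ((k:ℝ)+1))) atTop (nhds (t * p)) :=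
      hslope.const_mul t
    have heq : ∀ k : ℕ, t * slope g 0 (t / ((k:ℝ)+1)) = ((k:ℝ)+1) * g (t / ((k:ℝ)+1)) := by
      intro k
      have hk : ((k:ℝ)+1) ≠ 0 := by positivity
      rw [slope_def_field, hg0, sub_zero, sub_zero]
      field_simp
    have hle : ∀ k : ℕ, t * slope g 0 (t / ((k:ℝ)+1)) ≤ g t := by
      intro k
      rw [heq k]
      have hk : ((k:ℝ)+1) ≠ 0 := by positivity
      have := hiter (k+1) (t / ((k:ℝ)+1))
      push_cast at this
      rwa [mul_div_cancel₀ _ hk] at this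
    have := le_of_tendsto' h2 hle
    linarith [this]
  -- conclusion, part (d) for r ≤ 1
  have hd1 : ∀ r : ℝ, 0 ≤ r → r ≤ 1 → r ^ pplus ≤ PsiL L r := by
    intro r hr hr1
    rcases eq_or_lt_of_le hr with hr0 | hr0
    · rw [← hr0, Real.zero_rpow (by linarith : pplus ≠ 0), hPsi0]
    rcases eq_or_lt_of_le hr1 with hr1' | hr1'
    · rw [hr1', Real.one_rpow, hPsi1]
    have ht : Real.log r < 0 := Real.log_neg hr0 hr1'
    have hkey := hlim (Real.log r) pplus (Set.Iio 0) ht.ne hgIio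
      (fun k => div_neg_of_neg_of_pos ht (by positivity)) (by simp)
    have hgr : g (Real.log r) = Real.log (PsiL L r) := by
      simp [hgdef, Real.exp_log hr0]
    rw [hgr] at hkey
    rw [Real.rpow_def_of_pos hr0]
    calc Real.exp (Real.log r * pplus) ≤ Real.exp (Real.log (PsiL L r)) := by
          apply Real.exp_le_exp.mpr; linarith [hkey]
      _ = PsiL L r := Real.exp_log (hPsiPos r hr0)
  have hd2 : ∀ r : ℝ, 1 ≤ r → r ^ pminus ≤ PsiL L r := by
    intro r hr
    rcases eq_or_lt_of_le hr with hr1 | hr1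
    · rw [← hr1, Real.one_rpow, hPsi1]
    have hr0 : (0:ℝ) < r := lt_trans one_pos hr1
    have ht : 0 < Real.log r := Real.log_pos hr1
    have hkey := hlim (Real.log r) pminus (Set.Ioi 0) ht.ne' hgIoi
      (fun k => div_pos ht (by positivity)) (by simp)
    have hgr : g (Real.log r) = Real.log (PsiL L r) := by
      simp [hgdef, Real.exp_log hr0]
    rw [hgr] at hkey
    rw [Real.rpow_def_of_pos hr0]
    calc Real.exp (Real.log r * pminus) ≤ Real.exp (Real.log (PsiL L r)) := by
          apply Real.exp_le_exp.mpr; linarith [hkey]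
      _ = PsiL L r := Real.exp_log (hPsiPos r hr0)
  exact ⟨hb, hc, hd1, hd2⟩
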